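/- For the Beta(2−α,α)-coalescent with n leaves and 1 < α < 2, for every k ≥ 0 the conditional expectation of the number of external branches satisfies E[Y_k | X] = X_k·∏_{i=1}^k (1 − 1/X_i), where the conditional expectation is with respect to the σ-field generated by the whole chain (X_k)_{k≥0}. -/

import Mathlib

open MeasureTheory ProbabilityTheory Filter Asymptotics

noncomputable section

/-- The Euler Beta function `B(x,y) = Γ(x)Γ(y)/Γ(x+y)`. -/
def betaFn (x y : ℝ) : ℝ := Real.Gamma x * Real.Gamma y / Real.Gamma (x + y)

/-- The rate `λ_{b,k} = B(k-α, b-k+α)/B(2-α, α)` of a `k`-merger among `b` blocks for the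
Beta`(2-α,α)`-coalescent. -/
def lamRate (α : ℝ) (b k : ℕ) : ℝ := betaFn ((k : ℝ) - α) ((b : ℝ) - (k : ℝ) + α) / betaFn (2 - α) α

/-- The total merger rate `λ_b = ∑_{k=2}^b C(b,k) λ_{b,k}` of the Beta`(2-α,α)`-coalescent
started from `b` blocks. -/
def lamTotal (α : ℝ) (b : ℕ) : ℝ := ∑ k ∈ Finset.Icc 2 b, (b.choose k : ℝ) * lamRate α b k

/-- The one-step transition probabilities of the block-counting chain of the
Beta`(2-α,α)`-coalescent: from `b ≥ 2` blocks, jump to `b - u + 1` (for `2 ≤ u ≤ b`) with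
probability `C(b,u) λ_{b,u} / λ_b`; the states `b ≤ 1` are absorbing. -/
def transP (α : ℝ) (b c : ℕ) : ℝ :=
  if b ≤ 1 then (if c = b then 1 else 0)
  else if 1 ≤ c ∧ c < b then (b.choose (b - c + 1) : ℝ) * lamRate α b (b - c + 1) / lamTotal α b
  else 0

/-- `X` is (a copy of) the block-counting chain of the Beta`(2-α,α)`-coalescent with `n` leaves:
a Markov chain started at `n` with transition matrix `transP α`, extended to stay at `1` forever
after absorption. -/
def IsBlockChain {Ω : Type*} [MeasurableSpace Ω] (α : ℝ) (n : ℕ) (P : Measure Ω)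
    (X : ℕ → Ω → ℕ) : Prop :=
  (∀ ω, X 0 ω = n) ∧ (∀ k, Measurable (X k)) ∧
  ∀ (k : ℕ) (x : ℕ → ℕ) (c : ℕ),
    (P ({ω | ∀ i ≤ k, X i ω = x i} ∩ {ω | X (k+1) ω = c})).toReal
      = (P {ω | ∀ i ≤ k, X i ω = x i}).toReal * transP α (x k) c

/-- The total number of merging events `τ_n`, i.e. the absorption time of the block-counting
chain at state `1`. -/
def tauN {Ω : Type*} (X : ℕ → Ω → ℕ) (ω : Ω) : ℕ := sInf {k | X k ω = 1}

/-- The hypergeometric probability `P(H = h) = C(M,h) C(N-M,u-h) / C(N,u)`. -/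
def hypPMF (N M u h : ℕ) : ℝ :=
  if h ≤ u then ((M.choose h : ℝ) * ((N - M).choose (u - h) : ℝ)) / (N.choose u : ℝ) else 0

/-- One-step conditional law of the number of external branches: given `X_k = N`, `X_{k+1} = N'`
and `Y_k = M`, the value `Y_{k+1} = M'` has probability `P(H = M - M')` where `H` is
hypergeometric with parameters `(N, M, U)`, `U = N - N' + 1`. -/
def hypStep (N N' M M' : ℕ) : ℝ :=
  if M' ≤ M then hypPMF N M (N - N' + 1) (M - M') else 0

/-- `Y` is the process of external-branch counts associated with the block-counting chain `X`
with `n` leaves: `Y_0 = n` and, conditionally on `X` and `Y_0, …, Y_k`, one has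
`Y_{k+1} = Y_k - H_{k+1}` with `H_{k+1}` hypergeometric with parameters
`(X_k, Y_k, X_k - X_{k+1} + 1)`. -/
def IsExternalCount {Ω : Type*} [MeasurableSpace Ω] (n : ℕ) (P : Measure Ω)
    (X Y : ℕ → Ω → ℕ) : Prop :=
  (∀ ω, Y 0 ω = n) ∧ (∀ k, Measurable (Y k)) ∧
  ∀ (m k : ℕ), k < m → ∀ (x y : ℕ → ℕ),
    (P ({ω | ∀ i ≤ m, X i ω = x i} ∩ {ω | ∀ i ≤ k + 1, Y i ω = y i})).toReal
      = (P ({ω | ∀ i ≤ m, X i ω = x i} ∩ {ω | ∀ i ≤ k, Y i ω = y i})).toReal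
        * hypStep (x k) (x (k+1)) (y k) (y (k+1))

/-- `W` is a sequence of i.i.d. standard exponential random variables. -/
def IsStdExpSeq {Ω : Type*} [MeasurableSpace Ω] (P : Measure Ω) (W : ℕ → Ω → ℝ) : Prop :=
  (∀ k, Measurable (W k)) ∧
  iIndepFun (m := fun _ => Real.measurableSpace) W P ∧
  ∀ k, P.map (W k) = expMeasure 1

/-- `ς` has the maximally skewed strictly `α`-stable law used in the paper: mean zero,
`P(ς > x) = o(x^{-α})`, `P(ς < -x) ~ x^{-α}` as `x → ∞`, and for independent copies
`ς₁, ς₂` of `ς` and `a, b > 0`, `a ς₁ + b ς₂ ≝ (a^α + b^α)^{1/α} ς`. -/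
structure IsMaxSkewedStable {Ω' : Type*} [MeasurableSpace Ω'] (α : ℝ) (P' : Measure Ω')
    (ς : Ω' → ℝ) : Prop where
  measurable : Measurable ς
  integrable : Integrable ς P'
  mean_zero : ∫ ω, ς ω ∂P' = 0
  tail_right : (fun x : ℝ => (P' {ω | x < ς ω}).toReal) =o[atTop] fun x : ℝ => x ^ (-α)
  tail_left : (fun x : ℝ => (P' {ω | ς ω < -x}).toReal) ~[atTop] fun x : ℝ => x ^ (-α)
  stable : ∀ (Ω₂ : Type) (_ : MeasurableSpace Ω₂) (P₂ : Measure Ω₂), IsProbabilityMeasure P₂ →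
    ∀ ς₁ ς₂ : Ω₂ → ℝ, Measurable ς₁ → Measurable ς₂ → IndepFun ς₁ ς₂ P₂ →
      P₂.map ς₁ = P'.map ς → P₂.map ς₂ = P'.map ς →
      ∀ a b : ℝ, 0 < a → 0 < b →
        P₂.map (fun ω => a * ς₁ ω + b * ς₂ ω)
          = P'.map (fun ω => (a ^ α + b ^ α) ^ α⁻¹ * ς ω)

/-- Convergence in distribution (weak convergence of the laws, tested against bounded
continuous functions). -/
def TendstoInDist (μ : ℕ → Measure ℝ) (ν : Measure ℝ) : Prop :=
  ∀ f : BoundedContinuousFunction ℝ ℝ,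
    Tendsto (fun n => ∫ x, f x ∂(μ n)) atTop (nhds (∫ x, f x ∂ν))

/-- `Z_n = O_P(a_n)`: for every `δ > 0` there is a constant `C` with
`limsup_n P(|Z_n| > C a_n) ≤ δ`. -/
def IsBigOP {Ω : Type*} [MeasurableSpace Ω] (P : Measure Ω) (Z : ℕ → Ω → ℝ) (a : ℕ → ℝ) : Prop :=
  ∀ δ : ℝ, 0 < δ → ∃ C : ℝ, Filter.limsup (fun n => (P {ω | C * a n < |Z n ω|}).toReal) atTop ≤ δ

/-- The total external branch length `ℓ_n = ∑_{k=0}^{τ_n - 1} Y_k W_k / λ_{X_k}`. -/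
def extLength (α : ℝ) {Ω : Type*} (X Y : ℕ → Ω → ℕ) (W : ℕ → Ω → ℝ) (ω : Ω) : ℝ :=
  ∑ k ∈ Finset.range (tauN X ω), (Y k ω : ℝ) * W k ω / lamTotal α (X k ω)

/-- The total branch length `L_n = ∑_{k=0}^{τ_n - 1} X_k W_k / λ_{X_k}`. -/
def totLength (α : ℝ) {Ω : Type*} (X : ℕ → Ω → ℕ) (W : ℕ → Ω → ℝ) (ω : Ω) : ℝ :=
  ∑ k ∈ Finset.range (tauN X ω), (X k ω : ℝ) * W k ω / lamTotal α (X k ω)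

/-- The product `Π_j^k = ∏_{i=j+1}^k (1 - 1/X_i)`. -/
def PiJK {Ω : Type*} (X : ℕ → Ω → ℕ) (j k : ℕ) (ω : Ω) : ℝ :=
  ∏ i ∈ Finset.Icc (j + 1) k, (1 - 1 / (X i ω : ℝ))

set_option linter.unusedSectionVars false
set_option linter.unusedVariables false
set_option maxHeartbeats 1000000

section Comb
open Finset
lemma hypPMF_nonneg (N M u h : ℕ) : 0 ≤ hypPMF N M u h := by
  unfold hypPMF; split_ifs
  · positivity
  · exact le_rfl

lemma hypStep_nonneg (N N' M M' : ℕ) : 0 ≤ hypStep N N' M M' := by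
  unfold hypStep; split_ifs
  · exact hypPMF_nonneg _ _ _ _
  · exact le_rfl

lemma hypStep_of_gt {N N' M M' : ℕ} (h : M < M') : hypStep N N' M M' = 0 := by
  unfold hypStep; rw [if_neg (by omega)]

lemma hypStep_zero_left (M c : ℕ) : hypStep 0 0 M c = 0 := by
  unfold hypStep hypPMF; simp

lemma sub_mul_choose (M h : ℕ) : (M - h) * M.choose h = M * (M-1).choose h := by
  rcases M with _ | M₀
  · simp
  · have h1 := Nat.choose_succ_right_eq (M₀+1) h
    have h2 := Nat.add_one_mul_choose_eq M₀ h
    simp only [Nat.succ_eq_add_one, Nat.add_sub_cancel] at h1 h2 ⊢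
    rw [mul_comm, ← h1, ← h2]

lemma vander_aux (a b u : ℕ) :
    ∑ h ∈ range (a+1), (if h ≤ u then a.choose h * b.choose (u - h) else 0) = (a + b).choose u := by
  rw [Nat.add_choose_eq, Finset.Nat.sum_antidiagonal_eq_sum_range_succ_mk]
  have h1 : ∑ h ∈ range (a+1), (if h ≤ u then a.choose h * b.choose (u - h) else 0)
      = ∑ h ∈ range (a+u+1), (if h ≤ u then a.choose h * b.choose (u - h) else 0) := by
    apply Finset.sum_subset (Finset.range_subset_range.2 (by omega))
    · intro h hh hh'
      simp only [Finset.mem_range] at hh hh'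
      split_ifs with hu
      · rw [Nat.choose_eq_zero_of_lt (by omega), zero_mul]
      · rfl
  have h2 : ∑ h ∈ range (u+1), a.choose h * b.choose (u - h)
      = ∑ h ∈ range (a+u+1), (if h ≤ u then a.choose h * b.choose (u - h) else 0) := by
    rw [show ∑ h ∈ range (u+1), a.choose h * b.choose (u - h)
        = ∑ h ∈ range (u+1), (if h ≤ u then a.choose h * b.choose (u - h) else 0) from
      Finset.sum_congr rfl (fun h hh => by rw [if_pos (by simpa [Nat.lt_succ_iff] using hh)])]
    apply Finset.sum_subset (Finset.range_subset_range.2 (by omega))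
    · intro h hh hh'
      simp only [Finset.mem_range] at hh hh'
      rw [if_neg (by omega)]
  rw [h1, ← h2]

lemma S1_eq (N M u : ℕ) (hMN : M ≤ N) :
    ∑ h ∈ range (M+1), (if h ≤ u then (M - h) * M.choose h * ((N - M).choose (u - h)) else 0)
      = M * (N-1).choose u := by
  rcases M with _ | M₀
  · simp
  · have step : ∀ h, (M₀+1 - h) * (M₀+1).choose h * ((N - (M₀+1)).choose (u - h))
        = (M₀+1) * (M₀.choose h * ((N - (M₀+1)).choose (u - h))) := by
      intro h
      rw [sub_mul_choose]
      simp [Nat.add_sub_cancel, mul_assoc]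
    calc ∑ h ∈ range (M₀+1+1), (if h ≤ u then (M₀+1 - h) * (M₀+1).choose h * ((N - (M₀+1)).choose (u - h)) else 0)
        = ∑ h ∈ range (M₀+1+1), ((M₀+1) * if h ≤ u then M₀.choose h * ((N - (M₀+1)).choose (u - h)) else 0) := by
          apply Finset.sum_congr rfl; intro h _
          split_ifs
          · exact step h
          · simp
      _ = (M₀+1) * ∑ h ∈ range (M₀+1+1), (if h ≤ u then M₀.choose h * ((N - (M₀+1)).choose (u - h)) else 0) := by
          rw [Finset.mul_sum]
      _ = (M₀+1) * ∑ h ∈ range (M₀+1), (if h ≤ u then M₀.choose h * ((N - (M₀+1)).choose (u - h)) else 0) := by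
          rw [Finset.sum_range_succ]
          split_ifs
          · rw [Nat.choose_eq_zero_of_lt (by omega), zero_mul, add_zero]
          · rw [add_zero]
      _ = (M₀+1) * (M₀ + (N - (M₀+1))).choose u := by rw [vander_aux]
      _ = (M₀+1) * (N-1).choose u := by congr 2; omega

lemma mean_identity (N N' M : ℕ) (h1 : 1 ≤ N') (h2 : N' ≤ N) (h3 : M ≤ N) :
    ∑ c ∈ range (M+1), (c : ℝ) * hypStep N N' M c = (M:ℝ) * ((N':ℝ) - 1) / N := by
  set u := N - N' + 1 with hu
  have hu1 : 1 ≤ u := by omega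
  have huN : u ≤ N := by omega
  have hN : 1 ≤ N := by omega
  have hD : (N.choose u : ℝ) ≠ 0 := Nat.cast_ne_zero.2 (Nat.choose_pos huN).ne'
  -- rewrite hypStep to hypPMF on the range
  have e1 : ∑ c ∈ range (M+1), (c : ℝ) * hypStep N N' M c
      = ∑ c ∈ range (M+1), (c : ℝ) * hypPMF N M u (M - c) := by
    apply Finset.sum_congr rfl; intro c hc
    rw [Finset.mem_range, Nat.lt_succ_iff] at hc
    rw [hypStep, if_pos hc]
  -- reflect
  have e2 : ∑ c ∈ range (M+1), (c : ℝ) * hypPMF N M u (M - c)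
      = ∑ h ∈ range (M+1), ((M - h : ℕ) : ℝ) * hypPMF N M u h := by
    rw [← Finset.sum_range_reflect (fun h => ((M - h : ℕ) : ℝ) * hypPMF N M u h) (M+1)]
    apply Finset.sum_congr rfl; intro c hc
    rw [Finset.mem_range, Nat.lt_succ_iff] at hc
    rw [show M + 1 - 1 - c = M - c from by omega, show M - (M - c) = c from by omega]
  -- evaluate
  have e3 : ∀ h ∈ range (M+1), ((M - h : ℕ) : ℝ) * hypPMF N M u h
      = ((if h ≤ u then (M - h) * M.choose h * ((N - M).choose (u - h)) else 0 : ℕ) : ℝ)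
          / (N.choose u : ℝ) := by
    intro h _
    rw [hypPMF]
    split_ifs
    · push_cast; ring
    · simp
  rw [e1, e2, Finset.sum_congr rfl e3, ← Finset.sum_div, ← Nat.cast_sum, S1_eq N M u h3]
  -- final arithmetic
  have key : (N.choose u : ℝ) * ((N' : ℝ) - 1) = (N : ℝ) * ((N-1).choose u : ℝ) := by
    have k1 : N.choose u * (N - u) = N * (N-1).choose u := by
      have a1 := Nat.choose_succ_right_eq N u
      have a2 := Nat.add_one_mul_choose_eq (N-1) u
      rw [show N - 1 + 1 = N by omega] at a2
      omega
    have k2 : ((N - u : ℕ) : ℝ) = (N' : ℝ) - 1 := by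
      rw [show N - u = N' - 1 by omega]
      push_cast [h1]
      ring
    calc (N.choose u : ℝ) * ((N' : ℝ) - 1) = (N.choose u : ℝ) * ((N - u : ℕ) : ℝ) := by rw [k2]
      _ = ((N.choose u * (N - u) : ℕ) : ℝ) := by push_cast; ring
      _ = ((N * (N-1).choose u : ℕ) : ℝ) := by rw [k1]
      _ = (N : ℝ) * ((N-1).choose u : ℝ) := by push_cast; ring
  have hNr : (N : ℝ) ≠ 0 := Nat.cast_ne_zero.2 (by omega)
  rw [div_eq_div_iff hD hNr]
  push_cast
  linear_combination (-(M : ℝ)) * key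

end Comb

section Cyl
variable {Ω : Type*} [MeasurableSpace Ω]

/-- cylinder set -/
def cyl (Z : ℕ → Ω → ℕ) (m : ℕ) (x : ℕ → ℕ) : Set Ω := {ω | ∀ i ≤ m, Z i ω = x i}

/-- extension of a finite vector by 0 -/
def extv {m : ℕ} (v : Fin (m+1) → ℕ) : ℕ → ℕ := fun i => if h : i < m+1 then v ⟨i, h⟩ else 0

lemma extv_le {m : ℕ} (v : Fin (m+1) → ℕ) {i : ℕ} (hi : i ≤ m) : extv v i = v ⟨i, by omega⟩ := by
  rw [extv, dif_pos (by omega)]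

lemma cyl_congr {Z : ℕ → Ω → ℕ} {m : ℕ} {x x' : ℕ → ℕ} (h : ∀ i ≤ m, x i = x' i) :
    cyl Z m x = cyl Z m x' := by
  ext ω; constructor <;> intro hω i hi
  · rw [← h i hi]; exact hω i hi
  · rw [h i hi]; exact hω i hi

lemma cyl_measurable {Z : ℕ → Ω → ℕ} (hZ : ∀ k, Measurable (Z k)) (m : ℕ) (x : ℕ → ℕ) :
    MeasurableSet (cyl Z m x) := by
  have : cyl Z m x = ⋂ i ∈ Set.Iic m, (Z i) ⁻¹' {x i} := by
    ext ω; simp [cyl, Set.mem_iInter]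
  rw [this]
  exact MeasurableSet.biInter (Set.to_countable _) fun i _ => (hZ i) (measurableSet_singleton _)

lemma cyl_succ (Z : ℕ → Ω → ℕ) (m : ℕ) (x : ℕ → ℕ) :
    cyl Z (m+1) x = cyl Z m x ∩ {ω | Z (m+1) ω = x (m+1)} := by
  ext ω
  constructor
  · intro h; exact ⟨fun i hi => h i (by omega), h (m+1) le_rfl⟩
  · rintro ⟨h1, h2⟩ i hi
    rcases Nat.lt_or_ge i (m+1) with h | h
    · exact h1 i (by omega)
    · have : i = m + 1 := by omega
      rw [this]; exact h2

lemma cyl_mono {Z : ℕ → Ω → ℕ} {m m' : ℕ} (h : m ≤ m') (x : ℕ → ℕ) :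
    cyl Z m' x ⊆ cyl Z m x := fun ω hω i hi => hω i (hi.trans h)

lemma cyl_cover (Z : ℕ → Ω → ℕ) (k : ℕ) :
    (⋃ v : Fin (k+1) → ℕ, cyl Z k (extv v)) = Set.univ := by
  ext ω
  simp only [Set.mem_iUnion, Set.mem_univ, iff_true]
  refine ⟨fun i => Z i ω, fun i hi => ?_⟩
  rw [extv_le _ hi]

lemma cyl_disjoint (Z : ℕ → Ω → ℕ) (k : ℕ) :
    Pairwise (Function.onFun Disjoint fun v : Fin (k+1) → ℕ => cyl Z k (extv v)) := by
  intro v v' hne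
  rw [Function.onFun, Set.disjoint_left]
  intro ω h1 h2
  apply hne
  funext i
  have e1 := h1 i.1 (Nat.lt_succ_iff.mp i.2)
  have e2 := h2 i.1 (Nat.lt_succ_iff.mp i.2)
  rw [extv_le _ (Nat.lt_succ_iff.mp i.2)] at e1 e2
  simp only [Fin.eta] at e1 e2
  rw [← e1, ← e2]

variable {P : Measure Ω}

lemma lint_decomp {Z : ℕ → Ω → ℕ} (hZ : ∀ k, Measurable (Z k)) (k : ℕ)
    {s : Set Ω} (hs : MeasurableSet s) (f : Ω → ENNReal) :
    ∫⁻ ω in s, f ω ∂P = ∑' v : Fin (k+1) → ℕ, ∫⁻ ω in s ∩ cyl Z k (extv v), f ω ∂P := by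
  have : s = ⋃ v : Fin (k+1) → ℕ, (s ∩ cyl Z k (extv v)) := by
    rw [← Set.inter_iUnion, cyl_cover, Set.inter_univ]
  rw [← lintegral_iUnion (fun v => hs.inter (cyl_measurable hZ _ _))
    (fun v v' hne => (cyl_disjoint Z k hne).mono Set.inter_subset_right Set.inter_subset_right) f,
    ← this]

lemma lint_nat {Z : ℕ → Ω → ℕ} (hZ : ∀ k, Measurable (Z k)) (k : ℕ)
    {s : Set Ω} (hs : MeasurableSet s) :
    ∫⁻ ω in s, (Z k ω : ENNReal) ∂P
      = ∑' v : Fin (k+1) → ℕ, (v (Fin.last k) : ENNReal) * P (s ∩ cyl Z k (extv v)) := by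
  rw [lint_decomp hZ k hs]
  congr 1
  funext v
  rw [setLIntegral_congr_fun (hs.inter (cyl_measurable hZ _ _))
    (fun ω hω => ?_), setLIntegral_const]
  have := hω.2 k le_rfl
  rw [extv_le _ le_rfl] at this
  rw [this]
  rfl

end Cyl


section Chain
variable {Ω : Type*} [MeasurableSpace Ω] {α : ℝ} {n : ℕ} {P : Measure Ω} [IsProbabilityMeasure P]
  {X Y : ℕ → Ω → ℕ}

lemma transP_ne_cases {b c : ℕ} (h : transP α b c ≠ 0) :
    (b ≤ 1 ∧ c = b) ∨ (2 ≤ b ∧ 1 ≤ c ∧ c < b) := by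
  unfold transP at h
  split_ifs at h with h1 h2 h3
  · exact Or.inl ⟨h1, h2⟩
  · exact absurd rfl h
  · exact Or.inr ⟨by omega, h3⟩
  · exact absurd rfl h

lemma hypStep_ne_facts {N N' M M' : ℕ} (h : hypStep N N' M M' ≠ 0) :
    M' ≤ M ∧ M - M' ≤ N - N' + 1 ∧ M - M' ≤ M ∧ (N - N' + 1) - (M - M') ≤ N - M := by
  unfold hypStep hypPMF at h
  split_ifs at h with h1 h2
  · refine ⟨h1, h2, by omega, ?_⟩
    have hnum : ((M.choose (M - M') : ℝ) * ((N - M).choose (N - N' + 1 - (M - M')) : ℝ)) ≠ 0 := by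
      intro h0
      rw [h0, zero_div] at h
      exact h rfl
    have h4 : ((N - M).choose (N - N' + 1 - (M - M')) : ℝ) ≠ 0 :=
      fun h0 => hnum (by rw [h0, mul_zero])
    have h5 := Nat.cast_ne_zero.mp h4
    have h6 : ¬(N - M < N - N' + 1 - (M - M')) := fun hlt => h5 (Nat.choose_eq_zero_of_lt hlt)
    omega
  · exact absurd rfl h
  · exact absurd rfl h

lemma P_cylX_step (hX : IsBlockChain α n P X) (m : ℕ) (x : ℕ → ℕ) :
    (P (cyl X (m+1) x)).toReal = (P (cyl X m x)).toReal * transP α (x m) (x (m+1)) := by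
  rw [cyl_succ]
  exact hX.2.2 m x (x (m+1))

lemma P_cylXY_step (hY : IsExternalCount n P X Y) {m k : ℕ} (hkm : k < m) (x y : ℕ → ℕ) :
    P (cyl X m x ∩ cyl Y (k+1) y)
      = P (cyl X m x ∩ cyl Y k y) * ENNReal.ofReal (hypStep (x k) (x (k+1)) (y k) (y (k+1))) := by
  have h : (P (cyl X m x ∩ cyl Y (k+1) y)).toReal
      = (P (cyl X m x ∩ cyl Y k y)).toReal * hypStep (x k) (x (k+1)) (y k) (y (k+1)) :=
    hY.2.2 m k hkm x y
  have h1 : P (cyl X m x ∩ cyl Y (k+1) y) ≠ ⊤ := measure_ne_top _ _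
  have h2 : P (cyl X m x ∩ cyl Y k y) ≠ ⊤ := measure_ne_top _ _
  rw [← ENNReal.ofReal_toReal h1, h, ENNReal.ofReal_mul ENNReal.toReal_nonneg,
    ENNReal.ofReal_toReal h2]

lemma chain_trans_ne (hX : IsBlockChain α n P X) {m : ℕ} {x : ℕ → ℕ}
    (hm : P (cyl X m x) ≠ 0) : x 0 = n ∧ ∀ j < m, transP α (x j) (x (j+1)) ≠ 0 := by
  constructor
  · obtain ⟨ω, hω⟩ := MeasureTheory.nonempty_of_measure_ne_zero hm
    rw [← hω 0 (Nat.zero_le m), hX.1 ω]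
  · intro j hj
    have hsub : P (cyl X (j+1) x) ≠ 0 := fun h0 =>
      hm (measure_mono_null (cyl_mono (by omega) x) h0)
    have := P_cylX_step hX j x
    intro h0
    rw [h0, mul_zero] at this
    exact hsub ((ENNReal.toReal_eq_zero_iff _).mp this |>.resolve_right (measure_ne_top _ _))

lemma x_bounds (hX : IsBlockChain α n P X) {m : ℕ} {x : ℕ → ℕ}
    (hm : P (cyl X m x) ≠ 0) :
    x 0 = n ∧ (∀ j, j < m → x (j+1) ≤ x j) ∧ (1 ≤ n → ∀ j ≤ m, 1 ≤ x j) ∧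
      (n = 0 → ∀ j ≤ m, x j = 0) := by
  obtain ⟨hx0, htr⟩ := chain_trans_ne hX hm
  refine ⟨hx0, fun j hj => ?_, fun hn => ?_, fun hn => ?_⟩
  · rcases transP_ne_cases (htr j hj) with ⟨_, h⟩ | ⟨_, _, h⟩ <;> omega
  · intro j hj
    induction j with
    | zero => omega
    | succ i ih =>
      have hi := ih (by omega)
      rcases transP_ne_cases (htr i (by omega)) with ⟨_, h⟩ | ⟨_, h, _⟩ <;> omega
  · intro j hj
    induction j with
    | zero => omega
    | succ i ih =>
      have hi := ih (by omega)
      rcases transP_ne_cases (htr i (by omega)) with ⟨_, h⟩ | ⟨h, _, _⟩ <;> omega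

lemma xy_chain_ne (hY : IsExternalCount n P X Y) {m k : ℕ} (hkm : k ≤ m) {x y : ℕ → ℕ}
    (hq : P (cyl X m x ∩ cyl Y k y) ≠ 0) :
    y 0 = n ∧ ∀ j < k, hypStep (x j) (x (j+1)) (y j) (y (j+1)) ≠ 0 := by
  constructor
  · obtain ⟨ω, hω⟩ := MeasureTheory.nonempty_of_measure_ne_zero hq
    rw [← hω.2 0 (Nat.zero_le k), hY.1 ω]
  · intro j hj
    have hsub : P (cyl X m x ∩ cyl Y (j+1) y) ≠ 0 := fun h0 =>
      hq (measure_mono_null (Set.inter_subset_inter_right _ (cyl_mono (by omega) y)) h0)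
    have := P_cylXY_step hY (show j < m by omega) x y
    intro h0
    rw [h0, ENNReal.ofReal_zero, mul_zero] at this
    exact hsub this

lemma y_le_x (hX : IsBlockChain α n P X) (hY : IsExternalCount n P X Y)
    {m k : ℕ} (hn : 1 ≤ n) (hkm : k ≤ m) {x y : ℕ → ℕ}
    (hq : P (cyl X m x ∩ cyl Y k y) ≠ 0) : ∀ j ≤ k, y j ≤ x j := by
  have hA : P (cyl X m x) ≠ 0 := fun h0 =>
    hq (measure_mono_null Set.inter_subset_left h0)
  obtain ⟨hx0, hdec, hpos, _⟩ := x_bounds hX hA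
  obtain ⟨hy0, hhyp⟩ := xy_chain_ne hY hkm hq
  intro j hj
  induction j with
  | zero => omega
  | succ i ih =>
    have hi : y i ≤ x i := ih (by omega)
    obtain ⟨f1, f2, f3, f4⟩ := hypStep_ne_facts (hhyp i (by omega))
    have h1 : x (i+1) ≤ x i := hdec i (by omega)
    have h2 : 1 ≤ x (i+1) := hpos hn (i+1) (by omega)
    omega

end Chain


section Key
variable {Ω : Type*} [MeasurableSpace Ω] {α : ℝ} {n : ℕ} {P : Measure Ω} [IsProbabilityMeasure P]
  {X Y : ℕ → Ω → ℕ}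

def snocEquiv (k : ℕ) : ((Fin (k+1) → ℕ) × ℕ) ≃ (Fin (k+2) → ℕ) where
  toFun p := Fin.snoc p.1 p.2
  invFun w := (Fin.init w, w (Fin.last (k+1)))
  left_inv p := by simp
  right_inv w := by simp

lemma extv_snoc_le {k : ℕ} (v : Fin (k+1) → ℕ) (c : ℕ) {i : ℕ} (hi : i ≤ k) :
    extv (Fin.snoc v c) i = extv v i := by
  rw [extv_le _ (by omega : i ≤ k + 1), extv_le _ hi]
  have h : (⟨i, by omega⟩ : Fin (k+2)) = Fin.castSucc ⟨i, by omega⟩ := rfl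
  rw [h, Fin.snoc_castSucc]

lemma extv_snoc_k {k : ℕ} (v : Fin (k+1) → ℕ) (c : ℕ) :
    extv (Fin.snoc v c) k = v (Fin.last k) := by
  rw [extv_snoc_le v c le_rfl, extv_le _ le_rfl]
  rfl

lemma extv_snoc_top {k : ℕ} (v : Fin (k+1) → ℕ) (c : ℕ) :
    extv (Fin.snoc v c) (k+1) = c := by
  rw [extv_le _ le_rfl]
  have h : (⟨k+1, by omega⟩ : Fin (k+2)) = Fin.last (k+1) := rfl
  rw [h, Fin.snoc_last]

lemma key1 (hX : IsBlockChain α n P X) (hY : IsExternalCount n P X Y) :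
    ∀ k m (x : ℕ → ℕ), k ≤ m →
      ∫⁻ ω in cyl X m x, (Y k ω : ENNReal) ∂P
        = ENNReal.ofReal ((x k : ℝ) * ∏ i ∈ Finset.Icc 1 k, (1 - 1 / (x i : ℝ)))
            * P (cyl X m x) := by
  intro k
  induction k with
  | zero =>
    intro m x hm
    by_cases hA : P (cyl X m x) = 0
    · rw [Measure.restrict_eq_zero.mpr hA, hA]
      simp
    · have hx0 : x 0 = n := (chain_trans_ne hX hA).1
      have hc : ∀ ω ∈ cyl X m x, ((Y 0 ω : ℕ) : ENNReal) = ((n : ℕ) : ENNReal) :=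
        fun ω _ => by rw [hY.1 ω]
      rw [setLIntegral_congr_fun (cyl_measurable hX.2.1 m x)
        hc, setLIntegral_const]
      congr 1
      simp [hx0, ENNReal.ofReal_natCast]
  | succ k ih =>
    intro m x hm
    by_cases hA : P (cyl X m x) = 0
    · rw [Measure.restrict_eq_zero.mpr hA, hA]
      simp
    · have hmeasA := cyl_measurable hX.2.1 m x
      obtain ⟨hx0, hdec, hpos, hzero⟩ := x_bounds hX hA
      set r : ℝ := ((x (k+1) : ℝ) - 1) / (x k : ℝ) with hr
      have hrnn : 0 ≤ r := by
        rcases Nat.eq_zero_or_pos n with hn | hn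
        · rw [hr, hzero hn (k+1) (by omega), hzero hn k (by omega)]
          norm_num
        · have h1 : 1 ≤ x (k+1) := hpos hn (k+1) (by omega)
          have h2 : 1 ≤ x k := hpos hn k (by omega)
          apply div_nonneg
          · simp only [sub_nonneg]
            exact_mod_cast h1
          · positivity
      -- the inner sum over the last Y-coordinate
      have inner : ∀ v : Fin (k+1) → ℕ,
          (∑' c : ℕ, (c : ENNReal) * P (cyl X m x ∩ cyl Y (k+1) (extv (Fin.snoc v c))))
            = ENNReal.ofReal r
                * ((v (Fin.last k) : ENNReal) * P (cyl X m x ∩ cyl Y k (extv v))) := by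
        intro v
        have hstep : ∀ c : ℕ, P (cyl X m x ∩ cyl Y (k+1) (extv (Fin.snoc v c)))
            = P (cyl X m x ∩ cyl Y k (extv v))
                * ENNReal.ofReal (hypStep (x k) (x (k+1)) (v (Fin.last k)) c) := by
          intro c
          have e := P_cylXY_step hY (show k < m by omega) x (extv (Fin.snoc v c))
          rw [extv_snoc_k, extv_snoc_top,
            cyl_congr (Z := Y) (fun i hi => extv_snoc_le v c hi)] at e
          exact e
        by_cases hq : P (cyl X m x ∩ cyl Y k (extv v)) = 0
        · simp [hstep, hq]
        · have hvan : ∀ c ∉ Finset.range (v (Fin.last k) + 1),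
              (c : ENNReal) * P (cyl X m x ∩ cyl Y (k+1) (extv (Fin.snoc v c))) = 0 := by
            intro c hc
            rw [Finset.mem_range, Nat.lt_succ_iff, not_le] at hc
            rw [hstep c, hypStep_of_gt hc, ENNReal.ofReal_zero, mul_zero, mul_zero]
          have hsum : (∑' c : ℕ, (c : ENNReal) * P (cyl X m x ∩ cyl Y (k+1) (extv (Fin.snoc v c))))
              = ∑ c ∈ Finset.range (v (Fin.last k) + 1),
                  (c : ENNReal) * (P (cyl X m x ∩ cyl Y k (extv v))
                    * ENNReal.ofReal (hypStep (x k) (x (k+1)) (v (Fin.last k)) c)) := by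
            rw [tsum_eq_sum hvan]
            exact Finset.sum_congr rfl fun c _ => by rw [hstep c]
          rw [hsum]
          rcases Nat.eq_zero_or_pos n with hn | hn
          · -- degenerate: all x are 0, hypStep vanishes
            have hk0 : x k = 0 := hzero hn k (by omega)
            have hk1 : x (k+1) = 0 := hzero hn (k+1) (by omega)
            have : ENNReal.ofReal r = 0 := by
              rw [hr, hk0]
              simp
            rw [this, zero_mul]
            apply Finset.sum_eq_zero
            intro c _
            rw [hk0, hk1, hypStep_zero_left, ENNReal.ofReal_zero, mul_zero, mul_zero]
          · -- main case
            have hMN : v (Fin.last k) ≤ x k := by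
              have := y_le_x hX hY hn (by omega : k ≤ m) hq k le_rfl
              rwa [extv_le _ le_rfl] at this
            have h1N' : 1 ≤ x (k+1) := hpos hn (k+1) (by omega)
            have hN'N : x (k+1) ≤ x k := hdec k (by omega)
            have mean := mean_identity (x k) (x (k+1)) (v (Fin.last k)) h1N' hN'N hMN
            have e1 : ∀ c ∈ Finset.range (v (Fin.last k) + 1),
                (c : ENNReal) * (P (cyl X m x ∩ cyl Y k (extv v))
                    * ENNReal.ofReal (hypStep (x k) (x (k+1)) (v (Fin.last k)) c))
                  = P (cyl X m x ∩ cyl Y k (extv v))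
                    * ENNReal.ofReal ((c : ℝ) * hypStep (x k) (x (k+1)) (v (Fin.last k)) c) := by
              intro c _
              rw [ENNReal.ofReal_mul (by positivity), ← ENNReal.ofReal_natCast c]
              ring
            rw [Finset.sum_congr rfl e1, ← Finset.mul_sum,
              ← ENNReal.ofReal_sum_of_nonneg
                (fun c _ => mul_nonneg (by positivity) (hypStep_nonneg _ _ _ _)),
              mean]
            have harith : (v (Fin.last k) : ℝ) * ((x (k+1) : ℝ) - 1) / (x k : ℝ)
                = (v (Fin.last k) : ℝ) * r := by
              rw [hr, mul_div_assoc]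
            rw [harith, ENNReal.ofReal_mul (by positivity), ENNReal.ofReal_natCast]
            ring
      -- now the outer computation
      have e2 : ∀ p : (Fin (k+1) → ℕ) × ℕ,
          ((snocEquiv k p) (Fin.last (k+1)) : ENNReal)
              * P (cyl X m x ∩ cyl Y (k+1) (extv (snocEquiv k p)))
            = (p.2 : ENNReal) * P (cyl X m x ∩ cyl Y (k+1) (extv (Fin.snoc p.1 p.2))) := by
        intro p
        simp [snocEquiv]
      calc ∫⁻ ω in cyl X m x, (Y (k+1) ω : ENNReal) ∂P
          = ∑' w : Fin (k+2) → ℕ,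
              (w (Fin.last (k+1)) : ENNReal) * P (cyl X m x ∩ cyl Y (k+1) (extv w)) :=
            lint_nat hY.2.1 (k+1) hmeasA
        _ = ∑' p : (Fin (k+1) → ℕ) × ℕ,
              ((snocEquiv k p) (Fin.last (k+1)) : ENNReal)
                * P (cyl X m x ∩ cyl Y (k+1) (extv (snocEquiv k p))) :=
            (Equiv.tsum_eq (snocEquiv k) _).symm
        _ = ∑' p : (Fin (k+1) → ℕ) × ℕ,
              (p.2 : ENNReal) * P (cyl X m x ∩ cyl Y (k+1) (extv (Fin.snoc p.1 p.2))) :=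
            tsum_congr e2
        _ = ∑' v : Fin (k+1) → ℕ, ∑' c : ℕ,
              (c : ENNReal) * P (cyl X m x ∩ cyl Y (k+1) (extv (Fin.snoc v c))) :=
            ENNReal.tsum_prod'
        _ = ∑' v : Fin (k+1) → ℕ, ENNReal.ofReal r
              * ((v (Fin.last k) : ENNReal) * P (cyl X m x ∩ cyl Y k (extv v))) :=
            tsum_congr fun v => inner v
        _ = ENNReal.ofReal r * ∑' v : Fin (k+1) → ℕ,
              (v (Fin.last k) : ENNReal) * P (cyl X m x ∩ cyl Y k (extv v)) :=
            ENNReal.tsum_mul_left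
        _ = ENNReal.ofReal r * ∫⁻ ω in cyl X m x, (Y k ω : ENNReal) ∂P := by
            rw [← lint_nat hY.2.1 k hmeasA]
        _ = ENNReal.ofReal ((x (k+1) : ℝ)
              * ∏ i ∈ Finset.Icc 1 (k+1), (1 - 1 / (x i : ℝ))) * P (cyl X m x) := by
            rw [ih m x (by omega), ← mul_assoc, ← ENNReal.ofReal_mul hrnn]
            congr 1
            rw [Finset.prod_Icc_succ_top (by omega : 1 ≤ k + 1)]
            congr 1
            rcases Nat.eq_zero_or_pos n with hn | hn
            · have hk1 : x (k+1) = 0 := hzero hn (k+1) (by omega)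
              rw [hr, hk1, hzero hn k (by omega)]
              norm_num
            · have h1 : (1:ℝ) ≤ (x (k+1) : ℝ) := by exact_mod_cast hpos hn (k+1) (by omega)
              have h2 : (1:ℝ) ≤ (x k : ℝ) := by exact_mod_cast hpos hn k (by omega)
              have hk0 : (x k : ℝ) ≠ 0 := by linarith
              have hk1 : (x (k+1) : ℝ) ≠ 0 := by linarith
              rw [hr]
              field_simp

end Key


section Key2
variable {Ω : Type*} [MeasurableSpace Ω] {α : ℝ} {n : ℕ} {P : Measure Ω} [IsProbabilityMeasure P]
  {X Y : ℕ → Ω → ℕ}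

lemma factor_nonneg (m : ℕ) : 0 ≤ 1 - 1 / (m : ℝ) := by
  rcases Nat.eq_zero_or_pos m with h | h
  · simp [h]
  · have h1 : (1:ℝ) ≤ (m:ℝ) := by exact_mod_cast h
    have : 1 / (m:ℝ) ≤ 1 := by
      rw [div_le_one (by linarith)]
      exact h1
    linarith

lemma factor_le_one (m : ℕ) : 1 - 1 / (m : ℝ) ≤ 1 := by
  have : (0:ℝ) ≤ 1 / (m:ℝ) := by positivity
  linarith

lemma prod_factor_mem (x : ℕ → ℕ) (k : ℕ) :
    0 ≤ ∏ i ∈ Finset.Icc 1 k, (1 - 1 / (x i : ℝ)) ∧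
      ∏ i ∈ Finset.Icc 1 k, (1 - 1 / (x i : ℝ)) ≤ 1 := by
  constructor
  · exact Finset.prod_nonneg fun i _ => factor_nonneg _
  · exact Finset.prod_le_one (fun i _ => factor_nonneg _) (fun i _ => factor_le_one _)

/-- the constant version of the right-hand side integral on a cylinder -/
lemma key1' (hX : IsBlockChain α n P X) {k m : ℕ} (x : ℕ → ℕ) (hm : k ≤ m) :
    ∫⁻ ω in cyl X m x,
        ENNReal.ofReal ((X k ω : ℝ) * ∏ i ∈ Finset.Icc 1 k, (1 - 1 / (X i ω : ℝ))) ∂P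
      = ENNReal.ofReal ((x k : ℝ) * ∏ i ∈ Finset.Icc 1 k, (1 - 1 / (x i : ℝ)))
          * P (cyl X m x) := by
  have hc : ∀ ω ∈ cyl X m x,
      ENNReal.ofReal ((X k ω : ℝ) * ∏ i ∈ Finset.Icc 1 k, (1 - 1 / (X i ω : ℝ)))
        = ENNReal.ofReal ((x k : ℝ) * ∏ i ∈ Finset.Icc 1 k, (1 - 1 / (x i : ℝ))) := by
    intro ω hω
    rw [hω k hm]
    congr 2
    exact Finset.prod_congr rfl fun i hi => by
      rw [hω i ((Finset.mem_Icc.mp hi).2.trans hm)]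
  rw [setLIntegral_congr_fun (cyl_measurable hX.2.1 m x) hc,
    setLIntegral_const]

lemma cyl_decomp (Z : ℕ → Ω → ℕ) (m : ℕ) (x : ℕ → ℕ) :
    cyl Z m x = ⋃ c : ℕ, cyl Z (m+1) (Function.update x (m+1) c) := by
  ext ω
  simp only [Set.mem_iUnion]
  constructor
  · intro h
    refine ⟨Z (m+1) ω, fun i hi => ?_⟩
    rcases Nat.lt_or_ge i (m+1) with hlt | hge
    · rw [Function.update_of_ne (by omega), ← h i (by omega)]
    · have hi' : i = m+1 := by omega
      rw [hi', Function.update_self]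
  · rintro ⟨c, hc⟩ i hi
    have := hc i (by omega)
    rwa [Function.update_of_ne (by omega)] at this

lemma cyl_decomp_disjoint (Z : ℕ → Ω → ℕ) (m : ℕ) (x : ℕ → ℕ) :
    Pairwise (Function.onFun Disjoint fun c : ℕ => cyl Z (m+1) (Function.update x (m+1) c)) := by
  intro c c' hne
  rw [Function.onFun, Set.disjoint_left]
  intro ω h1 h2
  apply hne
  have e1 := h1 (m+1) le_rfl
  have e2 := h2 (m+1) le_rfl
  rw [Function.update_self] at e1 e2
  rw [← e1, ← e2]

lemma key2 (hX : IsBlockChain α n P X) (hY : IsExternalCount n P X Y) :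
    ∀ k m (x : ℕ → ℕ),
      ∫⁻ ω in cyl X m x, (Y k ω : ENNReal) ∂P
        = ∫⁻ ω in cyl X m x,
            ENNReal.ofReal ((X k ω : ℝ) * ∏ i ∈ Finset.Icc 1 k, (1 - 1 / (X i ω : ℝ))) ∂P := by
  intro k
  have base : ∀ m (x : ℕ → ℕ), k ≤ m →
      ∫⁻ ω in cyl X m x, (Y k ω : ENNReal) ∂P
        = ∫⁻ ω in cyl X m x,
            ENNReal.ofReal ((X k ω : ℝ) * ∏ i ∈ Finset.Icc 1 k, (1 - 1 / (X i ω : ℝ))) ∂P := by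
    intro m x hm
    rw [key1 hX hY k m x hm, key1' hX x hm]
  have aux : ∀ d m (x : ℕ → ℕ), k ≤ m + d →
      ∫⁻ ω in cyl X m x, (Y k ω : ENNReal) ∂P
        = ∫⁻ ω in cyl X m x,
            ENNReal.ofReal ((X k ω : ℝ) * ∏ i ∈ Finset.Icc 1 k, (1 - 1 / (X i ω : ℝ))) ∂P := by
    intro d
    induction d with
    | zero => intro m x hm; exact base m x (by omega)
    | succ d ihd =>
      intro m x hm
      by_cases h : k ≤ m
      · exact base m x h
      · have hmeas : ∀ c : ℕ, MeasurableSet (cyl X (m+1) (Function.update x (m+1) c)) :=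
          fun c => cyl_measurable hX.2.1 _ _
        rw [cyl_decomp X m x,
          lintegral_iUnion hmeas (cyl_decomp_disjoint X m x) _,
          lintegral_iUnion hmeas (cyl_decomp_disjoint X m x) _]
        exact tsum_congr fun c => ihd (m+1) (Function.update x (m+1) c) (by omega)
  intro m x
  exact aux k m x (by omega)

/-- total mass bounds -/
lemma cyl_const_le (hX : IsBlockChain α n P X) {k : ℕ} {x : ℕ → ℕ}
    (hA : P (cyl X k x) ≠ 0) :
    ENNReal.ofReal ((x k : ℝ) * ∏ i ∈ Finset.Icc 1 k, (1 - 1 / (x i : ℝ))) ≤ (n : ENNReal) := by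
  obtain ⟨hx0, hdec, hpos, hzero⟩ := x_bounds hX hA
  have hxk : x k ≤ n := by
    have : ∀ j ≤ k, x j ≤ n := by
      intro j hj
      induction j with
      | zero => omega
      | succ i ihi =>
        have h1 := ihi (by omega)
        have h2 := hdec i (by omega)
        omega
    exact this k le_rfl
  calc ENNReal.ofReal ((x k : ℝ) * ∏ i ∈ Finset.Icc 1 k, (1 - 1 / (x i : ℝ)))
      ≤ ENNReal.ofReal ((x k : ℝ) * 1) := by
        apply ENNReal.ofReal_le_ofReal
        apply mul_le_mul_of_nonneg_left (prod_factor_mem x k).2 (by positivity)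
    _ ≤ (n : ENNReal) := by
        rw [mul_one, ← ENNReal.ofReal_natCast n]
        apply ENNReal.ofReal_le_ofReal
        exact_mod_cast hxk

lemma sum_cyl_eq_one (hZ : ∀ k, Measurable (Z k)) (k : ℕ) :
    ∑' v : Fin (k+1) → ℕ, P (cyl Z k (extv v)) = P Set.univ := by
  rw [← measure_iUnion (cyl_disjoint Z k) (fun v => cyl_measurable hZ _ _), cyl_cover]

lemma lint_Y_le (hX : IsBlockChain α n P X) (hY : IsExternalCount n P X Y) (k : ℕ) :
    ∫⁻ ω, (Y k ω : ENNReal) ∂P ≤ (n : ENNReal) := by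
  rw [← Measure.restrict_univ (μ := P), lint_decomp hX.2.1 k MeasurableSet.univ]
  have hb : ∀ v : Fin (k+1) → ℕ,
      ∫⁻ ω in Set.univ ∩ cyl X k (extv v), (Y k ω : ENNReal) ∂P
        ≤ (n : ENNReal) * P (cyl X k (extv v)) := by
    intro v
    rw [Set.univ_inter, key1 hX hY k k (extv v) le_rfl]
    by_cases hA : P (cyl X k (extv v)) = 0
    · rw [hA, mul_zero, mul_zero]
    · exact mul_le_mul_left (cyl_const_le hX hA) _
  calc (∑' v : Fin (k+1) → ℕ, ∫⁻ ω in Set.univ ∩ cyl X k (extv v), (Y k ω : ENNReal) ∂P)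
      ≤ ∑' v : Fin (k+1) → ℕ, (n : ENNReal) * P (cyl X k (extv v)) := ENNReal.tsum_le_tsum hb
    _ = (n : ENNReal) * ∑' v : Fin (k+1) → ℕ, P (cyl X k (extv v)) := ENNReal.tsum_mul_left
    _ ≤ (n : ENNReal) := by
        rw [sum_cyl_eq_one hX.2.1 k, measure_univ, mul_one]

lemma lint_g_le (hX : IsBlockChain α n P X) (k : ℕ) :
    ∫⁻ ω, ENNReal.ofReal ((X k ω : ℝ) * ∏ i ∈ Finset.Icc 1 k, (1 - 1 / (X i ω : ℝ))) ∂P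
      ≤ (n : ENNReal) := by
  rw [← Measure.restrict_univ (μ := P), lint_decomp hX.2.1 k MeasurableSet.univ]
  have hb : ∀ v : Fin (k+1) → ℕ,
      ∫⁻ ω in Set.univ ∩ cyl X k (extv v),
          ENNReal.ofReal ((X k ω : ℝ) * ∏ i ∈ Finset.Icc 1 k, (1 - 1 / (X i ω : ℝ))) ∂P
        ≤ (n : ENNReal) * P (cyl X k (extv v)) := by
    intro v
    rw [Set.univ_inter, key1' hX (extv v) le_rfl]
    by_cases hA : P (cyl X k (extv v)) = 0
    · rw [hA, mul_zero, mul_zero]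
    · exact mul_le_mul_left (cyl_const_le hX hA) _
  calc (∑' v : Fin (k+1) → ℕ, ∫⁻ ω in Set.univ ∩ cyl X k (extv v),
          ENNReal.ofReal ((X k ω : ℝ) * ∏ i ∈ Finset.Icc 1 k, (1 - 1 / (X i ω : ℝ))) ∂P)
      ≤ ∑' v : Fin (k+1) → ℕ, (n : ENNReal) * P (cyl X k (extv v)) := ENNReal.tsum_le_tsum hb
    _ = (n : ENNReal) * ∑' v : Fin (k+1) → ℕ, P (cyl X k (extv v)) := ENNReal.tsum_mul_left
    _ ≤ (n : ENNReal) := by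
        rw [sum_cyl_eq_one hX.2.1 k, measure_univ, mul_one]

end Key2


section Gen
variable {Ω : Type*} [MeasurableSpace Ω] {α : ℝ} {n : ℕ} {P : Measure Ω} [IsProbabilityMeasure P]
  {X Y : ℕ → Ω → ℕ}

lemma cyl_inter_eq {m m' : ℕ} (hmm : m ≤ m') {x x' : ℕ → ℕ}
    (hne : (cyl X m x ∩ cyl X m' x').Nonempty) :
    cyl X m x ∩ cyl X m' x' = cyl X m' x' := by
  obtain ⟨ω, hω1, hω2⟩ := hne
  apply Set.inter_eq_self_of_subset_right
  intro ω' hω' i hi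
  rw [hω' i (hi.trans hmm), ← hω2 i (hi.trans hmm), hω1 i hi]

lemma isPiSystem_cyl : IsPiSystem {s : Set Ω | ∃ m x, s = cyl X m x} := by
  rintro s ⟨m, x, rfl⟩ t ⟨m', x', rfl⟩ hne
  rcases le_total m m' with h | h
  · exact ⟨m', x', cyl_inter_eq h hne⟩
  · rw [Set.inter_comm] at hne ⊢
    exact ⟨m, x, cyl_inter_eq h hne⟩

lemma preimage_singleton_eq (X : ℕ → Ω → ℕ) (i : ℕ) (c : ℕ) :
    X i ⁻¹' {c} = ⋃ v : {v : Fin (i+1) → ℕ // v (Fin.last i) = c}, cyl X i (extv v.1) := by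
  ext ω
  simp only [Set.mem_preimage, Set.mem_singleton_iff, Set.mem_iUnion]
  constructor
  · intro h
    refine ⟨⟨fun j => X j.1 ω, h⟩, fun j hj => ?_⟩
    rw [extv_le _ hj]
  · rintro ⟨⟨v, hv⟩, hω⟩
    have := hω i le_rfl
    rw [extv_le _ le_rfl] at this
    rw [this]
    exact hv

end Gen

section GenAux
variable {Ω : Type*}

lemma comap_le_generateFrom (X : ℕ → Ω → ℕ) :
    MeasurableSpace.comap (fun ω (i : ℕ) => X i ω) MeasurableSpace.pi
      ≤ MeasurableSpace.generateFrom {s : Set Ω | ∃ m x, s = cyl X m x} := by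
  letI m' : MeasurableSpace Ω :=
    MeasurableSpace.generateFrom {s : Set Ω | ∃ m x, s = cyl X m x}
  have hmeas : Measurable (fun ω (i : ℕ) => X i ω) := by
    apply measurable_pi_iff.mpr
    intro i
    intro t _
    have hdec : X i ⁻¹' t = ⋃ c ∈ t, X i ⁻¹' {c} := by
      ext ω
      simp
    rw [hdec]
    apply MeasurableSet.biUnion (Set.to_countable t)
    intro c _
    rw [preimage_singleton_eq X i c]
    exact MeasurableSet.iUnion fun v =>
      MeasurableSpace.measurableSet_generateFrom ⟨i, extv v.1, rfl⟩
  exact measurable_iff_comap_le.mp hmeas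

end GenAux

section Gen2
variable {Ω : Type*} [MeasurableSpace Ω] {X Y : ℕ → Ω → ℕ}

lemma comap_eq_generateFrom (X : ℕ → Ω → ℕ) :
    MeasurableSpace.comap (fun ω (i : ℕ) => X i ω) MeasurableSpace.pi
      = MeasurableSpace.generateFrom {s : Set Ω | ∃ m x, s = cyl X m x} := by
  apply le_antisymm (comap_le_generateFrom X)
  apply MeasurableSpace.generateFrom_le
  rintro s ⟨m, x, rfl⟩
  have hφ : Measurable[MeasurableSpace.comap (fun ω (i : ℕ) => X i ω) MeasurableSpace.pi]
      (fun ω (i : ℕ) => X i ω) := measurable_iff_comap_le.mpr le_rfl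
  have hXi : ∀ i, Measurable[MeasurableSpace.comap (fun ω (i : ℕ) => X i ω)
      MeasurableSpace.pi] (X i) := fun i => (measurable_pi_apply i).comp hφ
  exact @cyl_measurable Ω (MeasurableSpace.comap (fun ω (i : ℕ) => X i ω)
    MeasurableSpace.pi) X hXi m x

end Gen2

/-- Equation (12): `E[Y_k | X] = X_k ∏_{i=1}^k (1 - 1/X_i)`, where the conditioning is on the
σ-field generated by the whole block-counting chain `X`. -/
theorem conditional_expectation_external_count
    (α : ℝ) (hα₁ : 1 < α) (hα₂ : α < 2) (n : ℕ)
    (Ω : Type) [inst : MeasurableSpace Ω] (P : Measure Ω) [IsProbabilityMeasure P]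
    (X Y : ℕ → Ω → ℕ)
    (hX : IsBlockChain α n P X)
    (hY : IsExternalCount n P X Y) :
    ∀ k : ℕ,
      P[(fun ω => (Y k ω : ℝ)) |
          MeasurableSpace.comap (fun ω (i : ℕ) => X i ω) MeasurableSpace.pi]
        =ᵐ[P] fun ω => (X k ω : ℝ) * ∏ i ∈ Finset.Icc 1 k, (1 - 1 / (X i ω : ℝ)) := by
  intro k
  have hXm := hX.2.1
  have hYm := hY.2.1
  set C : Set (Set Ω) := {s : Set Ω | ∃ m x, s = cyl X m x} with hC
  have hGeq : (MeasurableSpace.comap (fun ω (i : ℕ) => X i ω) MeasurableSpace.pi) = MeasurableSpace.generateFrom C := comap_eq_generateFrom X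
  have hφ : Measurable (fun ω (i : ℕ) => X i ω) := measurable_pi_iff.mpr hXm
  have hm : (MeasurableSpace.comap (fun ω (i : ℕ) => X i ω) MeasurableSpace.pi) ≤ inst := hφ.comap_le
  set g : Ω → ℝ := fun ω => (X k ω : ℝ) * ∏ i ∈ Finset.Icc 1 k, (1 - 1 / (X i ω : ℝ)) with hg
  have hφG : Measurable[(MeasurableSpace.comap (fun ω (i : ℕ) => X i ω) MeasurableSpace.pi)] (fun ω (i : ℕ) => X i ω) :=
    measurable_iff_comap_le.mpr le_rfl
  have hXiG : ∀ i, Measurable[(MeasurableSpace.comap (fun ω (i : ℕ) => X i ω) MeasurableSpace.pi)] (X i) := fun i =>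
    (measurable_pi_apply i).comp hφG
  have hgG : Measurable[(MeasurableSpace.comap (fun ω (i : ℕ) => X i ω) MeasurableSpace.pi)] g := by
    apply Measurable.mul
    · exact measurable_from_top.comp (hXiG k)
    · apply Finset.measurable_prod
      intro i _
      apply Measurable.sub measurable_const
      simp only [one_div]
      exact (measurable_from_top.comp (hXiG i)).inv
  have hgsmG : StronglyMeasurable[(MeasurableSpace.comap (fun ω (i : ℕ) => X i ω) MeasurableSpace.pi)] g := hgG.stronglyMeasurable
  have hgmeas : Measurable g := hgG.mono hm le_rfl
  have hfmeas : Measurable (fun ω => (Y k ω : ℝ)) := measurable_from_top.comp (hYm k)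
  have hgnn : ∀ ω, 0 ≤ g ω := fun ω =>
    mul_nonneg (by positivity) (prod_factor_mem (fun i => X i ω) k).1
  have hflint : ∫⁻ ω, ENNReal.ofReal ((Y k ω : ℝ)) ∂P ≤ (n : ENNReal) := by
    calc ∫⁻ ω, ENNReal.ofReal ((Y k ω : ℝ)) ∂P = ∫⁻ ω, (Y k ω : ENNReal) ∂P :=
          lintegral_congr fun ω => ENNReal.ofReal_natCast _
      _ ≤ (n : ENNReal) := lint_Y_le hX hY k
  have hfint : Integrable (fun ω => (Y k ω : ℝ)) P := by
    refine ⟨hfmeas.aestronglyMeasurable, ?_⟩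
    rw [hasFiniteIntegral_iff_ofReal (Filter.Eventually.of_forall fun ω => by positivity)]
    exact lt_of_le_of_lt hflint (ENNReal.natCast_lt_top n)
  have hglint : ∫⁻ ω, ENNReal.ofReal (g ω) ∂P ≤ (n : ENNReal) := lint_g_le hX k
  have hgint : Integrable g P := by
    refine ⟨hgmeas.aestronglyMeasurable, ?_⟩
    rw [hasFiniteIntegral_iff_ofReal (Filter.Eventually.of_forall hgnn)]
    exact lt_of_le_of_lt hglint (ENNReal.natCast_lt_top n)
  -- equality of the two lintegrals on every `G`-measurable set
  have hset : ∀ s : Set Ω, MeasurableSet[(MeasurableSpace.comap (fun ω (i : ℕ) => X i ω) MeasurableSpace.pi)] s →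
      ∫⁻ ω in s, (Y k ω : ENNReal) ∂P = ∫⁻ ω in s, ENNReal.ofReal (g ω) ∂P := by
    have hμ1fin : IsFiniteMeasure ((P.withDensity (fun ω => (Y k ω : ENNReal))).trim hm) := by
      constructor
      rw [trim_measurableSet_eq hm MeasurableSet.univ,
        withDensity_apply _ MeasurableSet.univ, Measure.restrict_univ]
      exact lt_of_le_of_lt (lint_Y_le hX hY k) (ENNReal.natCast_lt_top n)
    have hagree : ∀ s ∈ C,
        (P.withDensity (fun ω => (Y k ω : ENNReal))).trim hm s
          = (P.withDensity (fun ω => ENNReal.ofReal (g ω))).trim hm s := by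
      rintro s ⟨m', x, rfl⟩
      have hsG : MeasurableSet[(MeasurableSpace.comap (fun ω (i : ℕ) => X i ω) MeasurableSpace.pi)] (cyl X m' x) := by
        rw [hGeq]
        exact MeasurableSpace.measurableSet_generateFrom ⟨m', x, rfl⟩
      rw [trim_measurableSet_eq hm hsG, trim_measurableSet_eq hm hsG,
        withDensity_apply _ (hm _ hsG), withDensity_apply _ (hm _ hsG)]
      exact key2 hX hY k m' x
    have huniv : (Set.univ : Set Ω) = cyl X 0 (fun _ => n) := by
      ext ω
      simp only [Set.mem_univ, true_iff]
      intro i hi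
      have hi0 : i = 0 := by omega
      rw [hi0, hX.1 ω]
    have key : (P.withDensity (fun ω => (Y k ω : ENNReal))).trim hm
        = (P.withDensity (fun ω => ENNReal.ofReal (g ω))).trim hm := by
      refine @ext_of_generate_finite Ω ((MeasurableSpace.comap (fun ω (i : ℕ) => X i ω) MeasurableSpace.pi)) _ _ C hGeq isPiSystem_cyl hμ1fin hagree ?_
      rw [huniv]
      exact hagree _ ⟨0, fun _ => n, rfl⟩
    intro s hs
    calc ∫⁻ ω in s, (Y k ω : ENNReal) ∂P
        = (P.withDensity (fun ω => (Y k ω : ENNReal))) s :=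
          (withDensity_apply _ (hm s hs)).symm
      _ = (P.withDensity (fun ω => (Y k ω : ENNReal))).trim hm s :=
          (trim_measurableSet_eq hm hs).symm
      _ = (P.withDensity (fun ω => ENNReal.ofReal (g ω))).trim hm s := by rw [key]
      _ = (P.withDensity (fun ω => ENNReal.ofReal (g ω))) s := trim_measurableSet_eq hm hs
      _ = ∫⁻ ω in s, ENNReal.ofReal (g ω) ∂P := withDensity_apply _ (hm s hs)
  -- equality of the Bochner set integrals
  have hsetint : ∀ s : Set Ω, MeasurableSet[(MeasurableSpace.comap (fun ω (i : ℕ) => X i ω) MeasurableSpace.pi)] s → P s < ⊤ →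
      ∫ ω in s, g ω ∂P = ∫ ω in s, (Y k ω : ℝ) ∂P := by
    intro s hs _
    rw [integral_eq_lintegral_of_nonneg_ae (Filter.Eventually.of_forall hgnn)
        hgmeas.aestronglyMeasurable,
      integral_eq_lintegral_of_nonneg_ae
        (Filter.Eventually.of_forall (fun ω => by positivity : ∀ ω, 0 ≤ (Y k ω : ℝ)))
        hfmeas.aestronglyMeasurable]
    congr 1
    rw [← hset s hs]
    exact lintegral_congr fun ω => (ENNReal.ofReal_natCast _).symm
  have haesm : AEStronglyMeasurable[(MeasurableSpace.comap (fun ω (i : ℕ) => X i ω) MeasurableSpace.pi)] g P := ⟨g, hgsmG, Filter.EventuallyEq.refl _ _⟩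
  haveI := isFiniteMeasure_trim (μ := P) hm
  have hcond := ae_eq_condExp_of_forall_setIntegral_eq hm hfint
      (fun s _ _ => hgint.integrableOn) hsetint haesm
  exact hcond.symm

end
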